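/- In a one-period market with finitely many states, there is no arbitrage (no portfolio with nonpositive cost today whose payoff is nonnegative in every state and strictly positive in at least one state, with strictly negative cost allowed only with nonnegative payoff) if and only if there exists a strictly positive state price vector q such that the price of every traded security equals the q-weighted sum of its state payoffs. -/

import Mathlib

open Finset

/-- Stiemke-type lemma via hyperplane separation: if the range of `θ ↦ Aᵀθ`
meets the nonnegative orthant only at `0`, there is a strictly positive `y`
with `yᵀA = 0`. -/
lemma stiemke {n m : ℕ} (A : Fin m → Fin n → ℝ)
    (h : ∀ θ : Fin m → ℝ, (∀ i, 0 ≤ ∑ j, θ j * A j i) → ∀ i, (∑ j, θ j * A j i) = 0) :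
    ∃ y : Fin n → ℝ, (∀ i, 0 < y i) ∧ ∀ j, ∑ i, y i * A j i = 0 := by
  set T : (Fin m → ℝ) →ₗ[ℝ] (Fin n → ℝ) :=
    { toFun := fun θ i => ∑ j, θ j * A j i
      map_add' := by intro a b; funext i; simp [add_mul, Finset.sum_add_distrib]
      map_smul' := by intro c a; funext i; simp [Finset.mul_sum, mul_assoc] } with hT
  set L : Submodule ℝ (Fin n → ℝ) := LinearMap.range T with hL
  have hLclosed : IsClosed (L : Set (Fin n → ℝ)) := L.closed_of_finiteDimensional
  have hdisj : Disjoint (L : Set (Fin n → ℝ)) (stdSimplex ℝ (Fin n)) := by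
    rw [Set.disjoint_left]
    rintro x ⟨θ, rfl⟩ ⟨hx0, hx1⟩
    have hz : ∀ i, (∑ j, θ j * A j i) = 0 := h θ (fun i => hx0 i)
    have : (∑ i, (∑ j, θ j * A j i)) = (1 : ℝ) := hx1
    rw [Finset.sum_congr rfl (fun i _ => hz i)] at this
    simp at this
  obtain ⟨f, u, v, hfu, huv, hfv⟩ :=
    geometric_hahn_banach_closed_compact L.convex hLclosed (convex_stdSimplex ℝ _)
      (isCompact_stdSimplex ℝ _) hdisj
  have hu0 : (0 : ℝ) < u := by simpa using hfu 0 L.zero_mem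
  have hfL : ∀ a ∈ L, f a = 0 := by
    intro a ha
    by_contra hfa
    have hmem : ((u + 1) / f a) • a ∈ L := L.smul_mem _ ha
    have := hfu _ hmem
    rw [map_smul, smul_eq_mul, div_mul_cancel₀ _ hfa] at this
    linarith
  set y : Fin n → ℝ := fun i => f (Pi.single i 1) with hy
  have hsingle : ∀ i : Fin n, Pi.single i (1 : ℝ) ∈ stdSimplex ℝ (Fin n) := by
    intro i
    constructor
    · intro x; by_cases hx : x = i <;> simp [Pi.single_apply, hx]
    · simp [Finset.sum_pi_single']
  have hypos : ∀ i, 0 < y i := fun i => lt_trans (lt_trans hu0 huv) (hfv _ (hsingle i))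
  have hfx : ∀ x : Fin n → ℝ, f x = ∑ i, x i * y i := by
    intro x
    conv_lhs => rw [pi_eq_sum_univ x]
    rw [map_sum]
    refine Finset.sum_congr rfl fun i _ => ?_
    rw [map_smul, smul_eq_mul, hy]
    congr 2
    funext k
    simp [Pi.single_apply, eq_comm]
  refine ⟨y, hypos, fun j => ?_⟩
  have hAj : ∀ i, (∑ k, (Pi.single j 1 : Fin m → ℝ) k * A k i) = A j i := by
    intro i
    rw [Finset.sum_eq_single j]
    · simp
    · intro k _ hk; simp [Pi.single_apply, hk]
    · simp
  have hT1 : T (Pi.single j (1:ℝ)) = A j := funext fun i => hAj i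
  have h0 := hfL (T (Pi.single j 1)) ⟨_, rfl⟩
  rw [hT1, hfx] at h0
  calc ∑ i, y i * A j i = ∑ i, A j i * y i :=
        Finset.sum_congr rfl fun i _ => mul_comm _ _
    _ = 0 := h0

/-- Fundamental theorem of asset pricing in a one-period market with finitely
many states: absence of arbitrage is equivalent to the existence of a strictly
positive state price vector. -/
theorem no_arbitrage_iff_state_prices {Ω m : ℕ}
    (D : Fin m → Fin Ω → ℝ) (p : Fin m → ℝ) :
    (¬ ∃ θ : Fin m → ℝ,
        ((∑ j, θ j * p j ≤ 0 ∧ (∀ ω, 0 ≤ ∑ j, θ j * D j ω) ∧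
            ∃ ω, 0 < ∑ j, θ j * D j ω) ∨
          (∑ j, θ j * p j < 0 ∧ ∀ ω, 0 ≤ ∑ j, θ j * D j ω))) ↔
      ∃ q : Fin Ω → ℝ, (∀ ω, 0 < q ω) ∧ ∀ j, p j = ∑ ω, q ω * D j ω := by
  constructor
  · intro nh
    set A : Fin m → Fin (Ω + 1) → ℝ := fun j => Fin.cons (-p j) (D j) with hA
    have hA0 : ∀ θ : Fin m → ℝ, (∑ j, θ j * A j 0) = -∑ j, θ j * p j := by
      intro θ; simp [hA, Finset.sum_neg_distrib, mul_neg]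
    have hAs : ∀ (θ : Fin m → ℝ) (ω : Fin Ω), (∑ j, θ j * A j ω.succ) = ∑ j, θ j * D j ω := by
      intro θ ω; simp [hA]
    have key : ∀ θ : Fin m → ℝ, (∀ i, 0 ≤ ∑ j, θ j * A j i) → ∀ i, (∑ j, θ j * A j i) = 0 := by
      intro θ hθ
      have hcost : ∑ j, θ j * p j ≤ 0 := by
        have := hθ 0; rw [hA0] at this; linarith
      have hpay : ∀ ω, 0 ≤ ∑ j, θ j * D j ω := by
        intro ω; have := hθ ω.succ; rwa [hAs] at this
      have hcost0 : ∑ j, θ j * p j = 0 := by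
        rcases lt_or_eq_of_le hcost with hlt | heq
        · exact absurd ⟨θ, Or.inr ⟨hlt, hpay⟩⟩ nh
        · exact heq
      have hpay0 : ∀ ω, (∑ j, θ j * D j ω) = 0 := by
        intro ω
        rcases eq_or_lt_of_le (hpay ω) with heq | hlt
        · exact heq.symm
        · exact absurd ⟨θ, Or.inl ⟨hcost, hpay, ω, hlt⟩⟩ nh
      intro i
      refine Fin.cases ?_ ?_ i
      · rw [hA0, hcost0, neg_zero]
      · intro ω; rw [hAs]; exact hpay0 ω
    obtain ⟨y, hypos, hyA⟩ := stiemke A key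
    refine ⟨fun ω => y ω.succ / y 0, fun ω => div_pos (hypos ω.succ) (hypos 0), fun j => ?_⟩
    have := hyA j
    rw [Fin.sum_univ_succ] at this
    have h0 : y 0 * A j 0 = -(y 0 * p j) := by simp [hA]
    have hs : ∀ ω : Fin Ω, y ω.succ * A j ω.succ = y ω.succ * D j ω := by
      intro ω; simp [hA]
    rw [h0, Finset.sum_congr rfl (fun ω _ => hs ω)] at this
    have hsum : (∑ ω, y ω.succ * D j ω) = y 0 * p j := by linarith
    have hy0 : y 0 ≠ 0 := ne_of_gt (hypos 0)
    have hdiv : (∑ ω, y ω.succ / y 0 * D j ω) = (∑ ω, y ω.succ * D j ω) / y 0 := by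
      rw [Finset.sum_div]
      exact Finset.sum_congr rfl fun ω _ => div_mul_eq_mul_div _ _ _
    rw [hdiv, hsum, mul_comm, mul_div_assoc, div_self hy0, mul_one]
  · rintro ⟨q, hq, hpq⟩ ⟨θ, hθ⟩
    have hcost : (∑ j, θ j * p j) = ∑ ω, q ω * ∑ j, θ j * D j ω := by
      calc (∑ j, θ j * p j) = ∑ j, ∑ ω, θ j * (q ω * D j ω) := by
            refine Finset.sum_congr rfl fun j _ => ?_
            rw [hpq j, Finset.mul_sum]
        _ = ∑ ω, ∑ j, θ j * (q ω * D j ω) := Finset.sum_comm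
        _ = ∑ ω, q ω * ∑ j, θ j * D j ω := by
            refine Finset.sum_congr rfl fun ω _ => ?_
            rw [Finset.mul_sum]
            exact Finset.sum_congr rfl fun j _ => by ring
    rcases hθ with ⟨hc, hpay, ω₀, hω₀⟩ | ⟨hc, hpay⟩
    · have : 0 < ∑ ω, q ω * ∑ j, θ j * D j ω := by
        refine Finset.sum_pos' (fun ω _ => mul_nonneg (hq ω).le (hpay ω)) ⟨ω₀, mem_univ _, ?_⟩
        exact mul_pos (hq ω₀) hω₀
      rw [hcost] at hc; linarith
    · have : 0 ≤ ∑ ω, q ω * ∑ j, θ j * D j ω :=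
        Finset.sum_nonneg fun ω _ => mul_nonneg (hq ω).le (hpay ω)
      rw [hcost] at hc; linarith
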